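/- Let G be a group satisfying (H1) and (H2), and suppose that the intersection of the normalizers N_G(B) over all basal subgroups B of G is trivial. Let A be a nontrivial basal subgroup of G. Then the rigid normalizer R(A) is a basal subgroup of G and C_G(R(A)) = C_G(A) (so R(A) is the unique maximal element of the equivalence class of A). -/

import Mathlib

variable {G : Type*} [Group G]

/-- The conjugate `B ^ g = g⁻¹ * B * g` of a subgroup `B` by an element `g`. -/
def conjBy (B : Subgroup G) (g : G) : Subgroup G :=
  B.map (MulAut.conj g⁻¹).toMonoidHom

/-- A subgroup is virtually solvable if it has a solvable subgroup of finite index. -/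
def VirtSolvable (H : Subgroup G) : Prop :=
  ∃ M : Subgroup G, M ≤ H ∧ M.relIndex H ≠ 0 ∧ IsSolvable ↥M

/-- A subgroup is virtually nilpotent if it has a nilpotent subgroup of finite index. -/
def VirtNilpotent (H : Subgroup G) : Prop :=
  ∃ M : Subgroup G, M ≤ H ∧ M.relIndex H ≠ 0 ∧ Group.IsNilpotent ↥M

/-- Hypothesis (H1): every virtually solvable subgroup whose normalizer has finite index
(i.e. belonging to `L(G)`) is trivial. -/
def HypH1 (G : Type*) [Group G] : Prop :=
  ∀ H : Subgroup G, (Subgroup.normalizer (H : Set G)).FiniteIndex → VirtSolvable H → H = ⊥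

/-- Hypothesis (H2): every nontrivial normal subgroup of `G` contains the derived subgroup
of some finite-index subgroup of `G`. -/
def HypH2 (G : Type*) [Group G] : Prop :=
  ∀ N : Subgroup G, N.Normal → N ≠ ⊥ →
    ∃ G₀ : Subgroup G, G₀.FiniteIndex ∧ ⁅G₀, G₀⁆ ≤ N

/-- `VA K H` means `K ≤va H`: `K ≤ H` and `K` contains the derived subgroup of some
finite-index subgroup of `H`. -/
def VA (K H : Subgroup G) : Prop :=
  K ≤ H ∧ ∃ A : Subgroup G, A ≤ H ∧ A.relIndex H ≠ 0 ∧ ⁅A, A⁆ ≤ K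

/-- A subgroup `B` is basal if its normalizer has finite index and every conjugate of `B`
either equals `B` or meets `B` trivially. -/
def IsBasal (B : Subgroup G) : Prop :=
  (Subgroup.normalizer (B : Set G)).FiniteIndex ∧ ∀ g : G, conjBy B g = B ∨ conjBy B g ⊓ B = ⊥

/-- The rigid normalizer `R(A)` of a basal subgroup `A`: the intersection of the
normalizers of all basal subgroups meeting `A` trivially. -/
def rigidNormalizer (A : Subgroup G) : Subgroup G :=
  ⨅ B ∈ {B : Subgroup G | IsBasal B ∧ A ⊓ B = ⊥}, Subgroup.normalizer (B : Set G)

open Subgroup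
open scoped commutatorElement

/-! ### Basic API for `conjBy` -/

lemma mem_conjBy {B : Subgroup G} {g x : G} : x ∈ conjBy B g ↔ g * x * g⁻¹ ∈ B := by
  simp only [conjBy, Subgroup.mem_map, MulEquiv.coe_toMonoidHom, MulAut.conj_apply, inv_inv]
  constructor
  · rintro ⟨b, hb, rfl⟩
    rwa [show g * (g⁻¹ * b * g) * g⁻¹ = b by group]
  · intro h
    exact ⟨g * x * g⁻¹, h, by group⟩

lemma conjBy_conjBy (B : Subgroup G) (g h : G) : conjBy (conjBy B g) h = conjBy B (g * h) := by
  ext x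
  rw [mem_conjBy, mem_conjBy, mem_conjBy]
  constructor
  · intro hx; rwa [show g * h * x * (g * h)⁻¹ = g * (h * x * h⁻¹) * g⁻¹ by group]
  · intro hx; rwa [show g * (h * x * h⁻¹) * g⁻¹ = g * h * x * (g * h)⁻¹ by group]

lemma conjBy_one (B : Subgroup G) : conjBy B 1 = B := by
  ext x; rw [mem_conjBy]; simp

lemma conjBy_inf (B C : Subgroup G) (g : G) :
    conjBy (B ⊓ C) g = conjBy B g ⊓ conjBy C g := by
  ext x; simp only [mem_conjBy, Subgroup.mem_inf]

lemma conjBy_bot (g : G) : conjBy (⊥ : Subgroup G) g = ⊥ := by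
  ext x
  rw [mem_conjBy, Subgroup.mem_bot, Subgroup.mem_bot]
  constructor
  · intro h
    have hx : x = g⁻¹ * (g * x * g⁻¹) * g := by group
    rw [hx, h]; group
  · rintro rfl; group

lemma conjBy_eq_bot_iff {B : Subgroup G} {g : G} : conjBy B g = ⊥ ↔ B = ⊥ := by
  constructor
  · intro h
    have h2 : conjBy (conjBy B g) g⁻¹ = conjBy (⊥ : Subgroup G) g⁻¹ := by rw [h]
    rwa [conjBy_conjBy, mul_inv_cancel, conjBy_one, conjBy_bot] at h2
  · rintro rfl; exact conjBy_bot g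

lemma conjBy_eq_self_iff {B : Subgroup G} {n : G} : conjBy B n = B ↔ n ∈ (Subgroup.normalizer (B : Set G)) := by
  constructor
  · intro h
    rw [mem_normalizer_iff]
    intro x
    constructor
    · intro hx
      have hx2 : x ∈ conjBy B n := h.symm ▸ hx
      exact mem_conjBy.mp hx2
    · intro hx
      have hx2 : x ∈ conjBy B n := mem_conjBy.mpr hx
      exact h ▸ hx2
  · intro hn
    ext x
    rw [mem_conjBy]
    exact (mem_normalizer_iff.mp hn x).symm

lemma normalizer_conjBy (B : Subgroup G) (g : G) :
    (Subgroup.normalizer ((conjBy B g) : Set G)) = conjBy (Subgroup.normalizer (B : Set G)) g :=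
  (Subgroup.map_equiv_normalizer_eq B (MulAut.conj g⁻¹)).symm

lemma index_conjBy (B : Subgroup G) (g : G) : (conjBy B g).index = B.index := by
  rw [conjBy, Subgroup.map_equiv_eq_comap_symm']
  exact Subgroup.index_comap_of_surjective B (MulEquiv.surjective _)

lemma finiteIndex_conjBy {B : Subgroup G} (h : B.FiniteIndex) (g : G) :
    (conjBy B g).FiniteIndex :=
  ⟨by rw [index_conjBy]; exact h.index_ne_zero⟩

lemma isBasal_conjBy {B : Subgroup G} (hB : IsBasal B) (g : G) : IsBasal (conjBy B g) := by
  constructor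
  · rw [normalizer_conjBy]
    exact finiteIndex_conjBy hB.1 g
  · intro h
    rcases hB.2 (g * h * g⁻¹) with hc | hc
    · left
      calc conjBy (conjBy B g) h = conjBy B (g * h) := conjBy_conjBy B g h
        _ = conjBy (conjBy B (g * h * g⁻¹)) g := by rw [conjBy_conjBy]; congr 1; group
        _ = conjBy B g := by rw [hc]
    · right
      have e : conjBy (conjBy B g) h ⊓ conjBy B g = conjBy (conjBy B (g * h * g⁻¹) ⊓ B) g := by
        rw [conjBy_inf, conjBy_conjBy, conjBy_conjBy]
        congr 2
        group
      rw [e, hc, conjBy_bot]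

/-! ### Normalizer/centralizer helpers -/

lemma conj_inv_mem_of_mem_normalizer {H : Subgroup G} {n x : G}
    (hn : n ∈ (Subgroup.normalizer (H : Set G))) (hx : x ∈ H) : n⁻¹ * x * n ∈ H := by
  have h2 := (mem_normalizer_iff.mp (inv_mem hn) x).mp hx
  rwa [inv_inv] at h2

lemma normalizer_inf_normalizer_le (H K : Subgroup G) :
    (Subgroup.normalizer (H : Set G)) ⊓ (Subgroup.normalizer (K : Set G)) ≤ (Subgroup.normalizer ((H ⊓ K : Subgroup G) : Set G)) := by
  intro n hn
  obtain ⟨h1, h2⟩ := Subgroup.mem_inf.mp hn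
  rw [mem_normalizer_iff]
  intro x
  rw [Subgroup.mem_inf, Subgroup.mem_inf]
  exact and_congr (mem_normalizer_iff.mp h1 x) (mem_normalizer_iff.mp h2 x)

lemma conj_mem_centralizer {H : Subgroup G} {n c : G}
    (hn : n ∈ (Subgroup.normalizer (H : Set G))) (hc : c ∈ Subgroup.centralizer (H : Set G)) :
    n * c * n⁻¹ ∈ Subgroup.centralizer (H : Set G) := by
  rw [Subgroup.mem_centralizer_iff] at hc ⊢
  intro h hh
  have hh' : n⁻¹ * h * n ∈ H := conj_inv_mem_of_mem_normalizer hn hh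
  have hcomm := hc _ hh'
  calc h * (n * c * n⁻¹) = n * ((n⁻¹ * h * n) * c) * n⁻¹ := by group
    _ = n * (c * (n⁻¹ * h * n)) * n⁻¹ := by rw [hcomm]
    _ = (n * c * n⁻¹) * h := by group

lemma normalizer_le_normalizer_centralizer (H : Subgroup G) :
    (Subgroup.normalizer (H : Set G)) ≤ (Subgroup.normalizer ((Subgroup.centralizer (H : Set G)) : Set G)) := by
  intro n hn
  rw [mem_normalizer_iff]
  intro c
  constructor
  · exact fun hc => conj_mem_centralizer hn hc
  · intro hc
    have h2 := conj_mem_centralizer (inv_mem hn) hc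
    rwa [show n⁻¹ * (n * c * n⁻¹) * n⁻¹⁻¹ = c by group] at h2

lemma le_centralizer_comm {H K : Subgroup G}
    (h : H ≤ Subgroup.centralizer (K : Set G)) : K ≤ Subgroup.centralizer (H : Set G) := by
  intro k hk
  rw [Subgroup.mem_centralizer_iff]
  intro x hx
  exact (Subgroup.mem_centralizer_iff.mp (h hx) k hk).symm

lemma centralizer_le_normalizer' (H : Subgroup G) :
    Subgroup.centralizer (H : Set G) ≤ (Subgroup.normalizer (H : Set G)) := by
  intro c hc
  rw [Subgroup.mem_centralizer_iff] at hc
  rw [mem_normalizer_iff]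
  intro x
  constructor
  · intro hx
    have e : c * x * c⁻¹ = x := by rw [show c * x = x * c from (hc x hx).symm]; group
    rwa [e]
  · intro hx
    have e := hc _ hx
    have hx' : x = c * x * c⁻¹ := by
      have e' : c * x = c * (c * x * c⁻¹) := by
        calc c * x = (c * x * c⁻¹) * c := by group
          _ = c * (c * x * c⁻¹) := e
      exact mul_left_cancel e'
    rw [hx']; exact hx

lemma Normal.inf' {H K : Subgroup G} (hH : H.Normal) (hK : K.Normal) : (H ⊓ K).Normal :=
  ⟨fun n hn g => Subgroup.mem_inf.mpr
    ⟨hH.conj_mem _ (Subgroup.mem_inf.mp hn).1 g, hK.conj_mem _ (Subgroup.mem_inf.mp hn).2 g⟩⟩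

/-! ### Consequences of (H1) -/

/-- If `M` has finite-index normalizer and meets a normal finite-index subgroup trivially,
then `M` is trivial (under (H1)). -/
lemma lemFin (hH1 : HypH1 G) {M X : Subgroup G} (hM : (Subgroup.normalizer (M : Set G)).FiniteIndex)
    (hXn : X.Normal) (hXf : X.FiniteIndex) (h : M ⊓ X = ⊥) : M = ⊥ := by
  apply hH1 _ hM
  refine ⟨X ⊓ M, inf_le_right, ?_, ?_⟩
  · rw [Subgroup.inf_relIndex_right]
    intro h0
    haveI := hXn
    have hd : X.relIndex M ∣ X.index := Subgroup.relIndex_dvd_index_of_normal X M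
    rw [h0] at hd
    exact hXf.index_ne_zero (zero_dvd_iff.mp hd)
  · have hb : X ⊓ M = ⊥ := by rw [inf_comm]; exact h
    rw [hb]
    apply isSolvable_of_comm
    rintro ⟨a, ha⟩ ⟨b, hb'⟩
    have ha1 : a = 1 := Subgroup.mem_bot.mp ha
    have hb1 : b = 1 := Subgroup.mem_bot.mp hb'
    apply Subtype.ext
    simp [ha1, hb1]

/-- Lemma Z: if `K ∈ L(G)` and `X` is normal of finite index, then
`K ⊓ C_G(K ⊓ X) = ⊥` (under (H1)). -/
lemma lemZ (hH1 : HypH1 G) {K X : Subgroup G} (hK : (Subgroup.normalizer (K : Set G)).FiniteIndex)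
    (hXn : X.Normal) (hXf : X.FiniteIndex) :
    K ⊓ Subgroup.centralizer ((K ⊓ X : Subgroup G) : Set G) = ⊥ := by
  have hNK : (Subgroup.normalizer (K : Set G)) ≤ (Subgroup.normalizer ((K ⊓ X : Subgroup G) : Set G)) := by
    intro n hn
    exact normalizer_inf_normalizer_le K X
      (Subgroup.mem_inf.mpr ⟨hn, by rw [normalizer_eq_top_iff.mpr hXn]; trivial⟩)
  have hNC : (Subgroup.normalizer (K : Set G)) ≤ (Subgroup.normalizer ((Subgroup.centralizer ((K ⊓ X : Subgroup G) : Set G)) : Set G)) :=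
    hNK.trans (normalizer_le_normalizer_centralizer _)
  -- the center of `K ⊓ X` is trivial by (H1)
  have hZle : (Subgroup.normalizer (K : Set G)) ≤
      (Subgroup.normalizer (((K ⊓ X) ⊓ Subgroup.centralizer ((K ⊓ X : Subgroup G) : Set G) : Subgroup G) : Set G)) :=
    fun n hn => normalizer_inf_normalizer_le _ _ (Subgroup.mem_inf.mpr ⟨hNK hn, hNC hn⟩)
  have hZfi :
      (Subgroup.normalizer (((K ⊓ X) ⊓ Subgroup.centralizer ((K ⊓ X : Subgroup G) : Set G) : Subgroup G) : Set G)).FiniteIndex := by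
    haveI := hK
    exact Subgroup.finiteIndex_of_le hZle
  have hZ : (K ⊓ X) ⊓ Subgroup.centralizer ((K ⊓ X : Subgroup G) : Set G) = ⊥ := by
    apply hH1 _ hZfi
    refine ⟨_, le_refl _, ?_, ?_⟩
    · rw [Subgroup.relIndex_self]; exact one_ne_zero
    · apply isSolvable_of_comm
      rintro ⟨a, ha⟩ ⟨b, hb⟩
      obtain ⟨ha1, ha2⟩ := Subgroup.mem_inf.mp ha
      obtain ⟨hb1, hb2⟩ := Subgroup.mem_inf.mp hb
      apply Subtype.ext
      exact (Subgroup.mem_centralizer_iff.mp ha2 b hb1).symm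
  -- now apply the finiteness trick to `K ⊓ C(K ⊓ X)`
  have hDle : (Subgroup.normalizer (K : Set G)) ≤
      (Subgroup.normalizer ((K ⊓ Subgroup.centralizer ((K ⊓ X : Subgroup G) : Set G) : Subgroup G) : Set G)) :=
    fun n hn => normalizer_inf_normalizer_le _ _ (Subgroup.mem_inf.mpr ⟨hn, hNC hn⟩)
  have hDfi :
      (Subgroup.normalizer ((K ⊓ Subgroup.centralizer ((K ⊓ X : Subgroup G) : Set G) : Subgroup G) : Set G)).FiniteIndex := by
    haveI := hK
    exact Subgroup.finiteIndex_of_le hDle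
  apply lemFin hH1 hDfi hXn hXf
  rw [inf_right_comm]
  exact hZ

/-- Lemma M: if `K, L ∈ L(G)` meet trivially and `X` is a normal finite-index subgroup
normalizing both, then `L` centralizes `K ⊓ X` (under (H1)). -/
lemma lemM (hH1 : HypH1 G) {K L X : Subgroup G}
    (hL : (Subgroup.normalizer (L : Set G)).FiniteIndex) (hKL : K ⊓ L = ⊥)
    (hXn : X.Normal) (hXf : X.FiniteIndex)
    (hXK : X ≤ (Subgroup.normalizer (K : Set G))) (hXL : X ≤ (Subgroup.normalizer (L : Set G))) :
    L ≤ Subgroup.centralizer ((K ⊓ X : Subgroup G) : Set G) := by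
  intro l hl
  rw [Subgroup.mem_centralizer_iff]
  intro k₀ hk₀
  obtain ⟨hkK, hkX⟩ := Subgroup.mem_inf.mp hk₀
  suffices hc : l⁻¹ * k₀⁻¹ * l * k₀ = 1 by
    calc k₀ * l = k₀ * l * (l⁻¹ * k₀⁻¹ * l * k₀) := by rw [hc, mul_one]
      _ = l * k₀ := by group
  have hcL : l⁻¹ * k₀⁻¹ * l * k₀ ∈ L := by
    have h1 : k₀⁻¹ * l * k₀ ∈ L := conj_inv_mem_of_mem_normalizer (hXL hkX) hl
    have h2 := mul_mem (inv_mem hl) h1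
    rwa [show l⁻¹ * (k₀⁻¹ * l * k₀) = l⁻¹ * k₀⁻¹ * l * k₀ by group] at h2
  have hcC : l⁻¹ * k₀⁻¹ * l * k₀ ∈ Subgroup.centralizer ((L ⊓ X : Subgroup G) : Set G) := by
    rw [Subgroup.mem_centralizer_iff]
    intro m hm
    obtain ⟨hmL, hmX⟩ := Subgroup.mem_inf.mp hm
    have comm₀ : m * k₀ = k₀ * m := by
      have huL : k₀⁻¹ * m⁻¹ * k₀ * m ∈ L :=
        mul_mem (conj_inv_mem_of_mem_normalizer (hXL hkX) (inv_mem hmL)) hmL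
      have huK : k₀⁻¹ * m⁻¹ * k₀ * m ∈ K := by
        have h1 : m⁻¹ * k₀ * m ∈ K := conj_inv_mem_of_mem_normalizer (hXK hmX) hkK
        have h2 := mul_mem (inv_mem hkK) h1
        rwa [show k₀⁻¹ * (m⁻¹ * k₀ * m) = k₀⁻¹ * m⁻¹ * k₀ * m by group] at h2
      have hu : k₀⁻¹ * m⁻¹ * k₀ * m ∈ K ⊓ L := Subgroup.mem_inf.mpr ⟨huK, huL⟩
      rw [hKL, Subgroup.mem_bot] at hu
      calc m * k₀ = m * k₀ * (k₀⁻¹ * m⁻¹ * k₀ * m) := by rw [hu, mul_one]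
        _ = k₀ * m := by group
    have comm₁ : m * (l⁻¹ * k₀⁻¹ * l) = (l⁻¹ * k₀⁻¹ * l) * m := by
      have hk₁X : l⁻¹ * k₀⁻¹ * l ∈ X := by
        have h2 := hXn.conj_mem k₀⁻¹ (inv_mem hkX) l⁻¹
        rwa [inv_inv] at h2
      have huL : (l⁻¹ * k₀⁻¹ * l)⁻¹ * m⁻¹ * (l⁻¹ * k₀⁻¹ * l) * m ∈ L :=
        mul_mem (conj_inv_mem_of_mem_normalizer (hXL hk₁X) (inv_mem hmL)) hmL
      have hm' : l * m * l⁻¹ ∈ X := hXn.conj_mem m hmX l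
      have hvK : l * ((l⁻¹ * k₀⁻¹ * l)⁻¹ * m⁻¹ * (l⁻¹ * k₀⁻¹ * l) * m) * l⁻¹ ∈ K := by
        have e : l * ((l⁻¹ * k₀⁻¹ * l)⁻¹ * m⁻¹ * (l⁻¹ * k₀⁻¹ * l) * m) * l⁻¹
            = k₀ * ((l * m * l⁻¹)⁻¹ * k₀⁻¹ * (l * m * l⁻¹)) := by group
        rw [e]
        exact mul_mem hkK (conj_inv_mem_of_mem_normalizer (hXK hm') (inv_mem hkK))
      have hvL : l * ((l⁻¹ * k₀⁻¹ * l)⁻¹ * m⁻¹ * (l⁻¹ * k₀⁻¹ * l) * m) * l⁻¹ ∈ L :=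
        mul_mem (mul_mem hl huL) (inv_mem hl)
      have hv : l * ((l⁻¹ * k₀⁻¹ * l)⁻¹ * m⁻¹ * (l⁻¹ * k₀⁻¹ * l) * m) * l⁻¹ ∈ K ⊓ L :=
        Subgroup.mem_inf.mpr ⟨hvK, hvL⟩
      rw [hKL, Subgroup.mem_bot] at hv
      have hu : (l⁻¹ * k₀⁻¹ * l)⁻¹ * m⁻¹ * (l⁻¹ * k₀⁻¹ * l) * m = 1 := by
        calc (l⁻¹ * k₀⁻¹ * l)⁻¹ * m⁻¹ * (l⁻¹ * k₀⁻¹ * l) * m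
            = l⁻¹ * (l * ((l⁻¹ * k₀⁻¹ * l)⁻¹ * m⁻¹ * (l⁻¹ * k₀⁻¹ * l) * m) * l⁻¹) * l := by
              group
          _ = l⁻¹ * 1 * l := by rw [hv]
          _ = 1 := by group
      calc m * (l⁻¹ * k₀⁻¹ * l)
          = m * (l⁻¹ * k₀⁻¹ * l) * ((l⁻¹ * k₀⁻¹ * l)⁻¹ * m⁻¹ * (l⁻¹ * k₀⁻¹ * l) * m) := by
            rw [hu, mul_one]
        _ = (l⁻¹ * k₀⁻¹ * l) * m := by group
    calc m * (l⁻¹ * k₀⁻¹ * l * k₀) = m * (l⁻¹ * k₀⁻¹ * l) * k₀ := by rw [← mul_assoc]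
      _ = (l⁻¹ * k₀⁻¹ * l) * m * k₀ := by rw [comm₁]
      _ = (l⁻¹ * k₀⁻¹ * l) * (k₀ * m) := by rw [mul_assoc, comm₀]
      _ = l⁻¹ * k₀⁻¹ * l * k₀ * m := by rw [← mul_assoc]
  have hbot := lemZ hH1 hL hXn hXf
  have hmem : l⁻¹ * k₀⁻¹ * l * k₀ ∈ L ⊓ Subgroup.centralizer ((L ⊓ X : Subgroup G) : Set G) :=
    Subgroup.mem_inf.mpr ⟨hcL, hcC⟩
  rw [hbot, Subgroup.mem_bot] at hmem
  exact hmem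

/-- Lemma C: two subgroups of `L(G)` which meet trivially commute elementwise (under (H1)). -/
lemma lemC (hH1 : HypH1 G) {K L : Subgroup G}
    (hK : (Subgroup.normalizer (K : Set G)).FiniteIndex) (hL : (Subgroup.normalizer (L : Set G)).FiniteIndex) (hKL : K ⊓ L = ⊥) :
    L ≤ Subgroup.centralizer (K : Set G) := by
  haveI := hK; haveI := hL
  set X := (Subgroup.normalizer (K : Set G)).normalCore ⊓ (Subgroup.normalizer (L : Set G)).normalCore with hXdef
  have hXn : X.Normal := Normal.inf' (Subgroup.normalCore_normal _) (Subgroup.normalCore_normal _)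
  have hXf : X.FiniteIndex := by rw [hXdef]; infer_instance
  have hXK : X ≤ (Subgroup.normalizer (K : Set G)) := inf_le_left.trans (Subgroup.normalCore_le _)
  have hXL : X ≤ (Subgroup.normalizer (L : Set G)) := inf_le_right.trans (Subgroup.normalCore_le _)
  have hLC : L ≤ Subgroup.centralizer ((K ⊓ X : Subgroup G) : Set G) :=
    lemM hH1 hL hKL hXn hXf hXK hXL
  have hKC : K ≤ Subgroup.centralizer ((L ⊓ X : Subgroup G) : Set G) :=
    lemM hH1 hK (by rw [inf_comm]; exact hKL) hXn hXf hXL hXK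
  -- the commutator subgroup M = [K, L]
  have hMnorm : (Subgroup.normalizer (K : Set G)) ⊓ (Subgroup.normalizer (L : Set G)) ≤ (Subgroup.normalizer ((⁅K, L⁆ : Subgroup G) : Set G)) := by
    intro n hn
    obtain ⟨h1, h2⟩ := Subgroup.mem_inf.mp hn
    rw [← conjBy_eq_self_iff]
    have e : conjBy ⁅K, L⁆ n = ⁅conjBy K n, conjBy L n⁆ :=
      Subgroup.map_commutator K L (MulAut.conj n⁻¹).toMonoidHom
    rw [e, conjBy_eq_self_iff.mpr h1, conjBy_eq_self_iff.mpr h2]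
  have hMfi : (Subgroup.normalizer ((⁅K, L⁆ : Subgroup G) : Set G)).FiniteIndex :=
    Subgroup.finiteIndex_of_le hMnorm
  -- M ⊓ K = ⊥
  have hMK : (⁅K, L⁆ : Subgroup G) ⊓ K = ⊥ := by
    have h1 : (⁅K, L⁆ : Subgroup G) ≤ Subgroup.centralizer ((K ⊓ X : Subgroup G) : Set G) := by
      rw [Subgroup.commutator_le]
      intro k hk l hl
      rw [commutatorElement_def]
      have hfst : k * l * k⁻¹ ∈ Subgroup.centralizer ((K ⊓ X : Subgroup G) : Set G) := by
        rw [Subgroup.mem_centralizer_iff]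
        intro m hm
        obtain ⟨hmK, hmX⟩ := Subgroup.mem_inf.mp hm
        have hmm : k⁻¹ * m * k ∈ (K ⊓ X : Subgroup G) := by
          refine Subgroup.mem_inf.mpr ⟨conj_inv_mem_of_mem_normalizer (le_normalizer hk) hmK, ?_⟩
          have h2 := hXn.conj_mem m hmX k⁻¹
          rwa [inv_inv] at h2
        have hcomm := Subgroup.mem_centralizer_iff.mp (hLC hl) _ hmm
        calc m * (k * l * k⁻¹) = k * ((k⁻¹ * m * k) * l) * k⁻¹ := by group
          _ = k * (l * (k⁻¹ * m * k)) * k⁻¹ := by rw [hcomm]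
          _ = (k * l * k⁻¹) * m := by group
      exact mul_mem hfst (inv_mem (hLC hl))
    have h2 := lemZ hH1 hK hXn hXf
    have h3 : (⁅K, L⁆ : Subgroup G) ⊓ K
        ≤ K ⊓ Subgroup.centralizer ((K ⊓ X : Subgroup G) : Set G) :=
      le_inf inf_le_right (inf_le_left.trans h1)
    rw [h2] at h3
    exact le_bot_iff.mp h3
  -- M ⊓ L = ⊥
  have hML : (⁅K, L⁆ : Subgroup G) ⊓ L = ⊥ := by
    have h1 : (⁅K, L⁆ : Subgroup G) ≤ Subgroup.centralizer ((L ⊓ X : Subgroup G) : Set G) := by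
      rw [Subgroup.commutator_le]
      intro k hk l hl
      rw [commutatorElement_def]
      have hsnd : l * k⁻¹ * l⁻¹ ∈ Subgroup.centralizer ((L ⊓ X : Subgroup G) : Set G) := by
        rw [Subgroup.mem_centralizer_iff]
        intro m hm
        obtain ⟨hmL, hmX⟩ := Subgroup.mem_inf.mp hm
        have hmm : l⁻¹ * m * l ∈ (L ⊓ X : Subgroup G) := by
          refine Subgroup.mem_inf.mpr ⟨conj_inv_mem_of_mem_normalizer (le_normalizer hl) hmL, ?_⟩
          have h2 := hXn.conj_mem m hmX l⁻¹
          rwa [inv_inv] at h2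
        have hcomm := Subgroup.mem_centralizer_iff.mp (inv_mem (hKC hk)) _ hmm
        calc m * (l * k⁻¹ * l⁻¹) = l * ((l⁻¹ * m * l) * k⁻¹) * l⁻¹ := by group
          _ = l * (k⁻¹ * (l⁻¹ * m * l)) * l⁻¹ := by rw [hcomm]
          _ = (l * k⁻¹ * l⁻¹) * m := by group
      have e : k * l * k⁻¹ * l⁻¹ = k * (l * k⁻¹ * l⁻¹) := by group
      rw [e]
      exact mul_mem (hKC hk) hsnd
    have h2 := lemZ hH1 hL hXn hXf
    have h3 : (⁅K, L⁆ : Subgroup G) ⊓ L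
        ≤ L ⊓ Subgroup.centralizer ((L ⊓ X : Subgroup G) : Set G) :=
      le_inf inf_le_right (inf_le_left.trans h1)
    rw [h2] at h3
    exact le_bot_iff.mp h3
  -- second round with X₂
  haveI := hMfi
  set X₂ := X ⊓ (Subgroup.normalizer ((⁅K, L⁆ : Subgroup G) : Set G)).normalCore with hX2def
  have hX2n : X₂.Normal := Normal.inf' hXn (Subgroup.normalCore_normal _)
  have hX2f : X₂.FiniteIndex := by
    rw [hX2def]; haveI := hXf; infer_instance
  have hX2M : X₂ ≤ (Subgroup.normalizer ((⁅K, L⁆ : Subgroup G) : Set G)) :=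
    inf_le_right.trans (Subgroup.normalCore_le _)
  have hKC2 : K ≤ Subgroup.centralizer (((⁅K, L⁆ : Subgroup G) ⊓ X₂ : Subgroup G) : Set G) :=
    lemM hH1 hK hMK hX2n hX2f hX2M (inf_le_left.trans hXK)
  have hLC2 : L ≤ Subgroup.centralizer (((⁅K, L⁆ : Subgroup G) ⊓ X₂ : Subgroup G) : Set G) :=
    lemM hH1 hL hML hX2n hX2f hX2M (inf_le_left.trans hXL)
  have hMC2 : (⁅K, L⁆ : Subgroup G)
      ≤ Subgroup.centralizer (((⁅K, L⁆ : Subgroup G) ⊓ X₂ : Subgroup G) : Set G) := by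
    rw [Subgroup.commutator_le]
    intro k hk l hl
    rw [commutatorElement_def]
    exact mul_mem (mul_mem (mul_mem (hKC2 hk) (hLC2 hl)) (inv_mem (hKC2 hk)))
      (inv_mem (hLC2 hl))
  have hM2 : (⁅K, L⁆ : Subgroup G) ⊓ X₂ = ⊥ := by
    have h1 : (⁅K, L⁆ : Subgroup G) ⊓ X₂
        ≤ Subgroup.centralizer (((⁅K, L⁆ : Subgroup G) : Subgroup G) : Set G) :=
      le_centralizer_comm hMC2
    have h2 := lemZ hH1 hMfi (X := (⊤ : Subgroup G)) inferInstance inferInstance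
    rw [inf_top_eq] at h2
    have h3 : (⁅K, L⁆ : Subgroup G) ⊓ X₂
        ≤ (⁅K, L⁆ : Subgroup G) ⊓ Subgroup.centralizer (((⁅K, L⁆ : Subgroup G)) : Set G) :=
      le_inf inf_le_left h1
    rw [h2] at h3
    exact le_bot_iff.mp h3
  have hM : (⁅K, L⁆ : Subgroup G) = ⊥ := lemFin hH1 hMfi hX2n hX2f hM2
  -- conclude
  intro l hl
  rw [Subgroup.mem_centralizer_iff]
  intro k hk
  have hcm : ⁅k, l⁆ ∈ (⁅K, L⁆ : Subgroup G) := Subgroup.commutator_mem_commutator hk hl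
  rw [hM, Subgroup.mem_bot, commutatorElement_def] at hcm
  calc k * l = (k * l * k⁻¹ * l⁻¹) * (l * k) := by group
    _ = 1 * (l * k) := by rw [hcm]
    _ = l * k := by rw [one_mul]

/-! ### The rigid normalizer -/

lemma mem_rigid {A : Subgroup G} {x : G} :
    x ∈ rigidNormalizer A ↔ ∀ B : Subgroup G, IsBasal B → A ⊓ B = ⊥ → x ∈ (Subgroup.normalizer (B : Set G)) := by
  simp only [rigidNormalizer, Subgroup.mem_iInf, Set.mem_setOf_eq, and_imp]

lemma rigid_conjBy (A : Subgroup G) (g : G) :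
    rigidNormalizer (conjBy A g) = conjBy (rigidNormalizer A) g := by
  ext x
  rw [mem_conjBy, mem_rigid, mem_rigid]
  constructor
  · intro h B hB hAB
    have h1 := h (conjBy B g) (isBasal_conjBy hB g) (by rw [← conjBy_inf, hAB, conjBy_bot])
    rw [normalizer_conjBy, mem_conjBy] at h1
    exact h1
  · intro h B' hB' hAB'
    have heq : A ⊓ conjBy B' g⁻¹ = ⊥ := by
      have h2 : conjBy (conjBy A g ⊓ B') g⁻¹ = conjBy (⊥ : Subgroup G) g⁻¹ := by rw [hAB']
      rwa [conjBy_inf, conjBy_conjBy, mul_inv_cancel, conjBy_one, conjBy_bot] at h2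
    have h1 := h (conjBy B' g⁻¹) (isBasal_conjBy hB' g⁻¹) heq
    rw [normalizer_conjBy, mem_conjBy] at h1
    rwa [show g⁻¹ * (g * x * g⁻¹) * g⁻¹⁻¹ = x by group] at h1

lemma rigid_normalizer_le {A : Subgroup G} :
    (Subgroup.normalizer (A : Set G)) ≤ (Subgroup.normalizer ((rigidNormalizer A) : Set G)) := by
  intro n hn
  rw [← conjBy_eq_self_iff, ← rigid_conjBy, conjBy_eq_self_iff.mpr hn]

lemma rigid_fi {A : Subgroup G} (hA : IsBasal A) :
    (Subgroup.normalizer ((rigidNormalizer A) : Set G)).FiniteIndex := by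
  haveI := hA.1
  exact Subgroup.finiteIndex_of_le rigid_normalizer_le

lemma A_le_rigid (hH1 : HypH1 G) {A : Subgroup G} (hA : IsBasal A) :
    A ≤ rigidNormalizer A := by
  intro a ha
  rw [mem_rigid]
  intro B hB hAB
  have h1 : A ≤ Subgroup.centralizer (B : Set G) :=
    lemC hH1 hB.1 hA.1 (by rw [inf_comm]; exact hAB)
  exact centralizer_le_normalizer' B (h1 ha)

lemma rigid_inf_centralizer (hH1 : HypH1 G)
    (htriv : (⨅ B ∈ {B : Subgroup G | IsBasal B}, (Subgroup.normalizer (B : Set G))) = ⊥)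
    {A : Subgroup G} (hA : IsBasal A) :
    rigidNormalizer A ⊓ Subgroup.centralizer (A : Set G) = ⊥ := by
  have hS : rigidNormalizer A ⊓ Subgroup.centralizer (A : Set G)
      ≤ ⨅ B ∈ {B : Subgroup G | IsBasal B}, (Subgroup.normalizer (B : Set G)) := by
    apply le_iInf₂
    intro B hB
    by_cases hAB : A ⊓ B = ⊥
    · intro x hx
      obtain ⟨hx1, _⟩ := Subgroup.mem_inf.mp hx
      exact mem_rigid.mp hx1 B hB hAB
    · intro s hs
      obtain ⟨_, hs2⟩ := Subgroup.mem_inf.mp hs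
      obtain ⟨y, hyAB, hy1⟩ : ∃ y ∈ A ⊓ B, y ≠ 1 := by
        by_contra hcon
        push_neg at hcon
        exact hAB ((Subgroup.eq_bot_iff_forall _).mpr hcon)
      obtain ⟨hyA, hyB⟩ := Subgroup.mem_inf.mp hyAB
      rcases hB.2 s with hc | hc
      · exact conjBy_eq_self_iff.mp hc
      · exfalso
        have hsy := Subgroup.mem_centralizer_iff.mp hs2 y hyA
        have hy' : y ∈ conjBy B s := by
          rw [mem_conjBy]
          have e : s * y * s⁻¹ = y := by
            rw [show s * y = y * s from hsy.symm]; group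
          rwa [e]
        have hmem : y ∈ conjBy B s ⊓ B := Subgroup.mem_inf.mpr ⟨hy', hyB⟩
        rw [hc, Subgroup.mem_bot] at hmem
        exact hy1 hmem
  rw [htriv] at hS
  exact le_bot_iff.mp hS

lemma rigid_centralizer_eq (hH1 : HypH1 G)
    (htriv : (⨅ B ∈ {B : Subgroup G | IsBasal B}, (Subgroup.normalizer (B : Set G))) = ⊥)
    {A : Subgroup G} (hA : IsBasal A) :
    Subgroup.centralizer ((rigidNormalizer A : Subgroup G) : Set G) =
      Subgroup.centralizer (A : Set G) := by
  apply le_antisymm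
  · apply Subgroup.centralizer_le
    exact SetLike.coe_subset_coe.mpr (A_le_rigid hH1 hA)
  · have hfiC : (Subgroup.normalizer ((Subgroup.centralizer (A : Set G)) : Set G)).FiniteIndex := by
      haveI := hA.1
      exact Subgroup.finiteIndex_of_le (normalizer_le_normalizer_centralizer A)
    exact lemC hH1 (rigid_fi hA) hfiC (rigid_inf_centralizer hH1 htriv hA)

theorem statement15 (hH1 : HypH1 G) (hH2 : HypH2 G)
    (htriv : (⨅ B ∈ {B : Subgroup G | IsBasal B}, Subgroup.normalizer (B : Set G)) = ⊥)
    (A : Subgroup G) (hA : IsBasal A) (hAn : A ≠ ⊥) :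
    IsBasal (rigidNormalizer A) ∧
      Subgroup.centralizer ((rigidNormalizer A : Subgroup G) : Set G) =
        Subgroup.centralizer (A : Set G) := by
  refine ⟨⟨rigid_fi hA, ?_⟩, rigid_centralizer_eq hH1 htriv hA⟩
  intro g
  rcases hA.2 g with h | h
  · left
    rw [← rigid_conjBy, h]
  · right
    have hAg : IsBasal (conjBy A g) := isBasal_conjBy hA g
    have hle : A ≤ Subgroup.centralizer ((conjBy A g : Subgroup G) : Set G) :=
      lemC hH1 hAg.1 hA.1 h
    rw [← rigid_centralizer_eq hH1 htriv hAg] at hle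
    have h3 : rigidNormalizer (conjBy A g) ≤ Subgroup.centralizer (A : Set G) :=
      le_centralizer_comm hle
    rw [← rigid_conjBy]
    have h4 : rigidNormalizer (conjBy A g) ⊓ rigidNormalizer A
        ≤ rigidNormalizer A ⊓ Subgroup.centralizer (A : Set G) :=
      le_inf inf_le_right (inf_le_left.trans h3)
    rw [rigid_inf_centralizer hH1 htriv hA] at h4
    exact le_bot_iff.mp h4
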